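/- Let F be a finite field, let I be a finite index set, and let (A_α)_{α∈I} be a tuple of alternating n×n matrices over F. Then (A_α)_{α∈I} is indecomposable under simultaneous congruence if and only if every matrix E ∈ M_{n×n}(F) satisfying A_α E = Eᵀ A_α for all α ∈ I is either nilpotent or invertible. -/

import Mathlib

open Matrix

namespace Stmt3

/-- An alternating square matrix. -/
def IsAltMat {F : Type*} [Ring F] {m : Type*} (A : Matrix m m F) : Prop :=
  Aᵀ = -A ∧ ∀ i, A i i = 0

/-- A tuple of `n×n` matrices is decomposable under simultaneous congruence if it is
simultaneously congruent to a tuple of block-diagonal matrices with two diagonal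
blocks of fixed sizes `n₁, n₂ ≥ 1` with `n₁ + n₂ = n`. -/
def Decomposable {F : Type*} [CommRing F] {ι : Type*} {n : ℕ}
    (A : ι → Matrix (Fin n) (Fin n) F) : Prop :=
  ∃ n₁ n₂ : ℕ, 1 ≤ n₁ ∧ 1 ≤ n₂ ∧ n₁ + n₂ = n ∧
    ∃ Q : Matrix (Fin n) (Fin n) F, IsUnit Q ∧
      ∀ (i : ι) (k l : Fin n),
        ((k.val < n₁ ∧ n₁ ≤ l.val) ∨ (l.val < n₁ ∧ n₁ ≤ k.val)) →
          (Q * A i * Qᵀ) k l = 0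

/-- `A * E^m = (E^m)ᵀ * A` for a self-adjoint `E`. -/
lemma selfadj_pow {F : Type*} [CommRing F] {n : ℕ} {A E : Matrix (Fin n) (Fin n) F}
    (h : A * E = Eᵀ * A) (m : ℕ) : A * E ^ m = (E ^ m)ᵀ * A := by
  induction m with
  | zero => simp
  | succ k ih =>
      rw [pow_succ, ← Matrix.mul_assoc, ih, Matrix.mul_assoc, h, transpose_mul,
        ← Matrix.mul_assoc, transpose_pow, ← pow_succ, ← pow_succ']

/-- skew symmetry of the pairing for an alternating matrix -/
lemma skew_pair {F : Type*} [CommRing F] {n : ℕ} {A : Matrix (Fin n) (Fin n) F}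
    (h : Aᵀ = -A) (u v : Fin n → F) :
    u ⬝ᵥ (A *ᵥ v) = -(v ⬝ᵥ (A *ᵥ u)) := by
  rw [Matrix.dotProduct_mulVec]
  have h2 : u ᵥ* A = Aᵀ *ᵥ u := by
    conv_lhs => rw [← Matrix.transpose_transpose A, Matrix.vecMul_transpose]
  rw [h2, h, Matrix.neg_mulVec, neg_dotProduct, dotProduct_comm]

lemma mul_mul_transpose_apply {F : Type*} [CommRing F] {n : ℕ}
    (Q A : Matrix (Fin n) (Fin n) F) (k l : Fin n) :
    (Q * A * Qᵀ) k l = (Q k) ⬝ᵥ (A *ᵥ (Q l)) := by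
  simp only [Matrix.mul_apply, Matrix.transpose_apply, dotProduct, Matrix.mulVec,
    dotProduct, Finset.sum_mul, Finset.mul_sum]
  rw [Finset.sum_comm]
  congr 1; ext j; congr 1; ext a; ring

/-- Fitting's lemma for tuples of alternating matrices over a finite field: a tuple is
indecomposable under simultaneous congruence iff every self-adjoint endomorphism of
the tuple is either nilpotent or invertible. -/
theorem fitting_lemma {F : Type*} [Field F] [Fintype F] {ι : Type*} [Fintype ι]
    {n : ℕ} (A : ι → Matrix (Fin n) (Fin n) F) (halt : ∀ i, IsAltMat (A i)) :
    ¬ Decomposable A ↔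
      ∀ E : Matrix (Fin n) (Fin n) F,
        (∀ i, A i * E = Eᵀ * A i) → (IsNilpotent E ∨ IsUnit E) := by
  constructor
  · -- indecomposable → every self-adjoint endo is nilpotent or a unit
    intro hnd E hE
    by_contra hcon
    push_neg at hcon
    obtain ⟨hnil, hunit⟩ := hcon
    apply hnd
    -- Fitting decomposition of E
    set f : (Fin n → F) →ₗ[F] (Fin n → F) := Matrix.toLinAlgEquiv' E with hf
    obtain ⟨N, hN⟩ := Filter.eventually_atTop.mp (LinearMap.eventually_isCompl_ker_pow_range_pow f)
    set m : ℕ := max N 1 with hm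
    have hcompl : IsCompl (LinearMap.ker (f ^ m)) (LinearMap.range (f ^ m)) :=
      hN m (le_max_left _ _)
    set p := LinearMap.ker (f ^ m) with hp
    set q := LinearMap.range (f ^ m) with hq
    have hfm : (f ^ m) = Matrix.toLinAlgEquiv' (E ^ m) := by rw [hf, map_pow]
    -- p ≠ ⊥
    have hpne : p ≠ ⊥ := by
      intro hbot
      apply hunit
      have hker : LinearMap.ker f = ⊥ := by
        rw [eq_bot_iff]
        intro x hx
        simp only [LinearMap.mem_ker] at hx
        have : x ∈ p := by
          rw [hp, LinearMap.mem_ker]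
          obtain ⟨m', hm'⟩ := Nat.exists_eq_add_of_le (le_max_right N 1)
          rw [show m = m' + 1 by omega, pow_succ, Module.End.mul_apply, hx, map_zero]
        rw [hbot] at this
        simpa using this
      have hbij : Function.Bijective f :=
        ⟨LinearMap.ker_eq_bot.mp hker, LinearMap.injective_iff_surjective.mp
          (LinearMap.ker_eq_bot.mp hker)⟩
      have : IsUnit f := (Module.End.isUnit_iff f).mpr hbij
      have := this.map (Matrix.toLinAlgEquiv'.symm : ((Fin n → F) →ₗ[F] _) ≃ₐ[F] _)
      simpa [hf] using this
    have hqne : q ≠ ⊥ := by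
      intro hbot
      apply hnil
      refine ⟨m, ?_⟩
      have : f ^ m = 0 := LinearMap.range_eq_bot.mp hbot
      rw [hfm] at this
      have := congrArg (Matrix.toLinAlgEquiv'.symm) this
      simpa using this
    -- ranks
    have hsum : Module.finrank F p + Module.finrank F q = n := by
      rw [Submodule.finrank_add_eq_of_isCompl hcompl, Module.finrank_fin_fun]
    set n₁ := Module.finrank F p with hn₁
    set n₂ := Module.finrank F q with hn₂
    have h1 : 1 ≤ n₁ := by
      rw [hn₁, Nat.one_le_iff_ne_zero]
      intro h0
      exact hpne (Submodule.finrank_eq_zero.mp h0)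
    have h2 : 1 ≤ n₂ := by
      rw [hn₂, Nat.one_le_iff_ne_zero]
      intro h0
      exact hqne (Submodule.finrank_eq_zero.mp h0)
    -- basis adapted to the decomposition
    let bp : Module.Basis (Fin n₁) F p := Module.finBasis F p
    let bq : Module.Basis (Fin n₂) F q := Module.finBasis F q
    let eqv : (p × q) ≃ₗ[F] (Fin n → F) := Submodule.prodEquivOfIsCompl p q hcompl
    let e : (Fin n₁ ⊕ Fin n₂) ≃ Fin n := finSumFinEquiv.trans (finCongr hsum)
    let b : Module.Basis (Fin n) F (Fin n → F) := ((bp.prod bq).map eqv).reindex e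
    -- membership
    have hbmem : ∀ k : Fin n, (k.val < n₁ → (b k : Fin n → F) ∈ p) ∧
        (n₁ ≤ k.val → (b k : Fin n → F) ∈ q) := by
      intro k
      have hbk : b k = ((bp.prod bq).map eqv) (e.symm k) := Module.Basis.reindex_apply _ _ _
      rcases hs : e.symm k with j | j
      · have hk : k = e (Sum.inl j) := by rw [← hs, Equiv.apply_symm_apply]
        have hkv : k.val = j.val := by
          rw [hk]; simp [e, finSumFinEquiv]
        constructor
        · intro _
          rw [hbk, hs, Module.Basis.map_apply]
          have : (bp.prod bq) (Sum.inl j) = ((bp j : p), (0 : q)) := by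
            ext
            · simp [Module.Basis.prod_apply_inl_fst]
            · simp [Module.Basis.prod_apply_inl_snd]
          rw [this, Submodule.coe_prodEquivOfIsCompl']
          simpa using (bp j).2
        · intro hle; have := j.isLt; omega
      · have hk : k = e (Sum.inr j) := by rw [← hs, Equiv.apply_symm_apply]
        have hkv : k.val = n₁ + j.val := by
          rw [hk]; simp [e, finSumFinEquiv]
        constructor
        · intro hlt; have := j.isLt; omega
        · intro _
          rw [hbk, hs, Module.Basis.map_apply]
          have : (bp.prod bq) (Sum.inr j) = ((0 : p), (bq j : q)) := by
            ext
            · simp [Module.Basis.prod_apply_inr_fst]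
            · simp [Module.Basis.prod_apply_inr_snd]
          rw [this, Submodule.coe_prodEquivOfIsCompl']
          simpa using (bq j).2
    -- orthogonality
    have horth : ∀ (i : ι), ∀ x ∈ p, ∀ y ∈ q, x ⬝ᵥ ((A i) *ᵥ y) = 0 := by
      intro i x hx y hy
      obtain ⟨z, hz⟩ := hy
      have hxz : (E ^ m) *ᵥ x = 0 := by
        rw [hp, LinearMap.mem_ker, hfm, Matrix.toLinAlgEquiv'_apply] at hx
        exact hx
      have hyz : y = (E ^ m) *ᵥ z := by
        rw [← hz, hfm, Matrix.toLinAlgEquiv'_apply]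
      rw [hyz, Matrix.mulVec_mulVec, selfadj_pow (hE i) m, ← Matrix.mulVec_mulVec,
        Matrix.dotProduct_mulVec, Matrix.vecMul_transpose, hxz]
      simp
    -- the matrix of the basis
    refine ⟨n₁, n₂, h1, h2, hsum, Matrix.of (fun k a => b k a), ?_, ?_⟩
    · -- IsUnit
      have : Matrix.of (fun k a => b k a) = ((Pi.basisFun F (Fin n)).toMatrix b)ᵀ := by
        ext k a
        simp [Module.Basis.toMatrix_apply]
      rw [this]
      have : Invertible ((Pi.basisFun F (Fin n)).toMatrix b) :=
        (Pi.basisFun F (Fin n)).invertibleToMatrix b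
      have hu : IsUnit ((Pi.basisFun F (Fin n)).toMatrix b) := isUnit_of_invertible _
      rw [Matrix.isUnit_iff_isUnit_det, Matrix.det_transpose,
        ← Matrix.isUnit_iff_isUnit_det]
      exact hu
    · intro i k l hkl
      rw [mul_mul_transpose_apply]
      have hQapp : ∀ j : Fin n, (Matrix.of (fun k a => b k a)) j = b j := fun _ => rfl
      rw [hQapp, hQapp]
      rcases hkl with ⟨hk, hl⟩ | ⟨hl, hk⟩
      · exact horth i _ ((hbmem k).1 hk) _ ((hbmem l).2 hl)
      · rw [skew_pair (halt i).1, horth i _ ((hbmem l).1 hl) _ ((hbmem k).2 hk), neg_zero]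
  · -- decomposable → bad E exists
    intro h hdec
    obtain ⟨n₁, n₂, h1, h2, hsum, Q, hQ, hblock⟩ := hdec
    have hdet : IsUnit Q.det := (Matrix.isUnit_iff_isUnit_det Q).mp hQ
    have hdetT : IsUnit Qᵀ.det := by rwa [Matrix.det_transpose]
    set d : Fin n → F := fun l => if l.val < n₁ then 1 else 0 with hd
    set D : Matrix (Fin n) (Fin n) F := Matrix.diagonal d with hD
    set E : Matrix (Fin n) (Fin n) F := Qᵀ * D * Qᵀ⁻¹ with hE
    have hQQ : Qᵀ * Qᵀ⁻¹ = 1 := Matrix.mul_nonsing_inv _ hdetT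
    have hQQ' : Qᵀ⁻¹ * Qᵀ = 1 := Matrix.nonsing_inv_mul _ hdetT
    have hn0 : 0 < n := by omega
    -- commutation
    have hcomm : ∀ i, (Q * A i * Qᵀ) * D = D * (Q * A i * Qᵀ) := by
      intro i
      ext k l
      rw [Matrix.mul_diagonal, Matrix.diagonal_mul]
      by_cases hk : k.val < n₁ <;> by_cases hl : l.val < n₁
      · simp [hd, hk, hl]
      · rw [hblock i k l (Or.inl ⟨hk, not_lt.mp hl⟩)]; simp
      · rw [hblock i k l (Or.inr ⟨hl, not_lt.mp hk⟩)]; simp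
      · simp [hd, hk, hl]
    have hselfadj : ∀ i, A i * E = Eᵀ * A i := by
      intro i
      have hET : Eᵀ = Q⁻¹ * D * Q := by
        rw [hE, Matrix.transpose_mul, Matrix.transpose_mul, Matrix.transpose_nonsing_inv,
          Matrix.transpose_transpose, hD, Matrix.diagonal_transpose, Matrix.mul_assoc]
      rw [hET, hE]
      have := hcomm i
      -- Q * A i * Qᵀ * D = D * (Q * A i * Qᵀ)
      have h3 : Q * (A i * (Qᵀ * D)) = (D * Q) * (A i * Qᵀ) := by
        calc Q * (A i * (Qᵀ * D)) = (Q * A i * Qᵀ) * D := by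
              simp only [Matrix.mul_assoc]
          _ = D * (Q * A i * Qᵀ) := this
          _ = (D * Q) * (A i * Qᵀ) := by simp only [Matrix.mul_assoc]
      have h4 : A i * (Qᵀ * D) = (Q⁻¹ * D * Q) * (A i * Qᵀ) := by
        have := congrArg (fun M => Q⁻¹ * M) h3
        simpa [← Matrix.mul_assoc, Matrix.nonsing_inv_mul _ hdet] using this
      have := congrArg (fun M => M * Qᵀ⁻¹) h4
      simpa [Matrix.mul_assoc, hQQ] using this
    rcases h E hselfadj with hnil | hunit
    · -- E is idempotent and nonzero
      have hDD : D * D = D := by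
        rw [hD, Matrix.diagonal_mul_diagonal]
        exact congrArg Matrix.diagonal (funext fun l => by
          by_cases hl : l.val < n₁ <;> simp [hd, hl])
      have hEE : E * E = E := by
        rw [hE]
        calc Qᵀ * D * Qᵀ⁻¹ * (Qᵀ * D * Qᵀ⁻¹)
            = Qᵀ * (D * (Qᵀ⁻¹ * Qᵀ) * D) * Qᵀ⁻¹ := by simp only [Matrix.mul_assoc]
          _ = Qᵀ * D * Qᵀ⁻¹ := by rw [hQQ', Matrix.mul_one, hDD]
      obtain ⟨k, hk⟩ := hnil
      have hEpow : ∀ j : ℕ, E ^ (j + 1) = E := by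
        intro j
        induction j with
        | zero => simp
        | succ i ih => rw [pow_succ, ih, hEE]
      have hE0 : E = 0 := by
        rcases k with _ | k
        · exfalso
          have h10 : (1 : Matrix (Fin n) (Fin n) F) = 0 := by rw [← pow_zero E, hk]
          have h11 := congrFun (congrFun h10 ⟨0, hn0⟩) ⟨0, hn0⟩
          rw [Matrix.one_apply_eq, Matrix.zero_apply] at h11
          exact one_ne_zero h11
        · rw [hEpow k] at hk; exact hk
      have hD0 : D = 0 := by
        have : Qᵀ⁻¹ * E * Qᵀ = Qᵀ⁻¹ * (Qᵀ * D * Qᵀ⁻¹) * Qᵀ := by rw [hE]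
        rw [hE0] at this
        simp only [Matrix.mul_zero, Matrix.zero_mul] at this
        calc D = (Qᵀ⁻¹ * Qᵀ) * D * (Qᵀ⁻¹ * Qᵀ) := by rw [hQQ']; simp
          _ = Qᵀ⁻¹ * (Qᵀ * D * Qᵀ⁻¹) * Qᵀ := by simp only [Matrix.mul_assoc]
          _ = 0 := by rw [← this]
      have : D ⟨0, hn0⟩ ⟨0, hn0⟩ = 1 := by
        rw [hD, Matrix.diagonal_apply_eq]
        simp only [hd]
        rw [if_pos]
        omega
      rw [hD0] at this
      simp at this
    · -- det E = 0
      have hdetD : D.det = 0 := by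
        rw [hD, Matrix.det_diagonal]
        apply Finset.prod_eq_zero (Finset.mem_univ (⟨n₁, by omega⟩ : Fin n))
        simp [hd]
      have hdet0 : E.det = 0 := by
        rw [hE, Matrix.det_mul, Matrix.det_mul, hdetD, mul_zero, zero_mul]
      have hu : IsUnit E.det := (Matrix.isUnit_iff_isUnit_det E).mp hunit
      rw [hdet0] at hu
      exact not_isUnit_zero hu

end Stmt3
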